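/- Let A be a ring, A₀ a subring, π : A → A₀ a ring homomorphism with π|_{A₀} = id, A₊ = ker π. Suppose every finitely generated right A-module M with M·A₊ = M is zero. Let P be a finitely generated projective right A-module and let T(P) = P ⊗_A A₀ ≅ P/(P·A₊). Let g : T(P) → P be an A₀-linear section of the canonical projection f : P → T(P). Then the A-linear map ψ : T(P) ⊗_{A₀} A → P, x ⊗ a ↦ g(x)·a, is an isomorphism. -/

import Mathlib

universe u

/-- Universal property of `Q ⊗_{A₀} A` (for left modules, `A ⊗_{A₀} Q`). -/
def IsBaseChangeAlong (A : Type u) [Ring A] (A₀ : Subring A)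
    (Q : Type u) [AddCommGroup Q] [Module A₀ Q]
    (E : Type u) [AddCommGroup E] [Module A E] (ι : Q →ₗ[A₀] E) : Prop :=
  ∀ (N : Type u) [AddCommGroup N] [Module A N] (f : Q →ₗ[A₀] N),
    ∃! F : E →ₗ[A] N, ∀ q : Q, F (ι q) = f q

/-- The submodule `N·A₊` (for left modules: `A₊·N`), where `A₊ = ker π`. -/
def kerSMulSubmodule {A : Type u} [Ring A] {A₀ : Subring A} (π : A →+* A₀)
    (N : Type u) [AddCommGroup N] [Module A N] : Submodule A N :=
  Submodule.span A {x : N | ∃ a ∈ RingHom.ker π, ∃ m : N, x = a • m}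

lemma mem_kerSMul {A : Type u} [Ring A] {A₀ : Subring A} {π : A →+* A₀}
    {N : Type u} [AddCommGroup N] [Module A N] {a : A} (ha : a ∈ RingHom.ker π) (m : N) :
    a • m ∈ kerSMulSubmodule π N :=
  Submodule.subset_span ⟨a, ha, m, rfl⟩

lemma kerSMul_map {A : Type u} [Ring A] {A₀ : Subring A} (π : A →+* A₀)
    {M N : Type u} [AddCommGroup M] [Module A M] [AddCommGroup N] [Module A N]
    (h : M →ₗ[A] N) :
    Submodule.map h (kerSMulSubmodule π M) ≤ kerSMulSubmodule π N := by
  rw [kerSMulSubmodule, Submodule.map_span]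
  apply Submodule.span_le.mpr
  rintro _ ⟨x, ⟨a, ha, m, rfl⟩, rfl⟩
  exact Submodule.subset_span ⟨a, ha, h m, by simp⟩

theorem psi_iso (A : Type u) [Ring A] (A₀ : Subring A) (π : A →+* A₀)
    (hπ : ∀ x : A₀, π (x : A) = x)
    (hNak : ∀ (M : Type u) [AddCommGroup M] [Module A M], Module.Finite A M →
      kerSMulSubmodule π M = ⊤ → Subsingleton M)
    (P : Type u) [AddCommGroup P] [Module A P]
    [Module.Finite A P] [Module.Projective A P]
    (g : (P ⧸ kerSMulSubmodule π P) →ₗ[A₀] P)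
    (hg : ∀ x : P ⧸ kerSMulSubmodule π P, Submodule.Quotient.mk (g x) = x)
    (E : Type u) [AddCommGroup E] [Module A E]
    (ι : (P ⧸ kerSMulSubmodule π P) →ₗ[A₀] E)
    (hE : IsBaseChangeAlong A A₀ (P ⧸ kerSMulSubmodule π P) E ι)
    (ψ : E →ₗ[A] P) (hψ : ∀ x, ψ (ι x) = g x) :
    Function.Bijective ψ := by
  set T := P ⧸ kerSMulSubmodule π P with hT
  -- a - π a is in the kernel of π
  have hker : ∀ a : A, a - (π a : A) ∈ RingHom.ker π := by
    intro a
    simp [RingHom.mem_ker, map_sub, hπ]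
  -- the A-action on T factors through π
  have hTsmul : ∀ (a : A) (x : T), a • x = ((π a : A₀) : A) • x := by
    intro a x
    obtain ⟨p, rfl⟩ := Submodule.Quotient.mk_surjective _ x
    have h2 : (a - ((π a : A₀) : A)) • (Submodule.Quotient.mk p : T) = 0 := by
      rw [← Submodule.Quotient.mk_smul, Submodule.Quotient.mk_eq_zero]
      exact mem_kerSMul (hker a) p
    rw [sub_smul] at h2
    exact sub_eq_zero.mp h2
  -- E is spanned over A by the image of ι
  have Espan : Submodule.span A (Set.range ι) = ⊤ := by
    set E' := Submodule.span A (Set.range ι) with hE'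
    obtain ⟨F, -, hUniq⟩ := hE (E ⧸ E') (0 : T →ₗ[A₀] E ⧸ E')
    have h1 : E'.mkQ = F := hUniq E'.mkQ (fun q => by
      simp only [Submodule.mkQ_apply, LinearMap.zero_apply, Submodule.Quotient.mk_eq_zero]
      exact Submodule.subset_span ⟨q, rfl⟩)
    have h0 : (0 : E →ₗ[A] E ⧸ E') = F := hUniq 0 (fun q => rfl)
    rw [Submodule.eq_top_iff']
    intro e
    have : E'.mkQ e = 0 := by rw [h1, ← h0]; rfl
    rwa [Submodule.mkQ_apply, Submodule.Quotient.mk_eq_zero] at this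
  -- every element of E is ι t plus an element of A₊·E
  have decomp : ∀ e : E, ∃ t : T, e - ι t ∈ kerSMulSubmodule π E := by
    intro e
    have he : e ∈ Submodule.span A (Set.range ι) := Espan ▸ Submodule.mem_top
    induction he using Submodule.span_induction with
    | mem x hx =>
      obtain ⟨t, rfl⟩ := hx
      exact ⟨t, by simp⟩
    | zero => exact ⟨0, by simp⟩
    | add x y _ _ hx hy =>
      obtain ⟨t, ht⟩ := hx
      obtain ⟨u, hu⟩ := hy
      refine ⟨t + u, ?_⟩
      have : x + y - ι (t + u) = (x - ι t) + (y - ι u) := by rw [map_add]; abel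
      rw [this]
      exact Submodule.add_mem _ ht hu
    | smul a x _ hx =>
      obtain ⟨t, ht⟩ := hx
      refine ⟨π a • t, ?_⟩
      have h3 : ι (π a • t) = ((π a : A₀) : A) • ι t := by rw [map_smul]; rfl
      have h4 : a • x - ι (π a • t) = a • (x - ι t) + (a - ((π a : A₀) : A)) • ι t := by
        rw [h3, smul_sub, sub_smul]; abel
      rw [h4]
      exact Submodule.add_mem _ (Submodule.smul_mem _ _ ht) (mem_kerSMul (hker a) (ι t))
  -- Surjectivity
  have hsurj : Function.Surjective ψ := by
    set R := LinearMap.range ψ with hR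
    have hfin : Module.Finite A (P ⧸ R) := inferInstance
    have htop : kerSMulSubmodule π (P ⧸ R) = ⊤ := by
      rw [Submodule.eq_top_iff']
      intro x
      obtain ⟨p, rfl⟩ := Submodule.Quotient.mk_surjective _ x
      have hp : p - g (Submodule.Quotient.mk p) ∈ kerSMulSubmodule π P := by
        rw [← Submodule.Quotient.mk_eq_zero, Submodule.Quotient.mk_sub, hg]
        simp
      have h5 : (Submodule.Quotient.mk (g (Submodule.Quotient.mk p)) : P ⧸ R) = 0 := by
        rw [Submodule.Quotient.mk_eq_zero]
        exact ⟨ι (Submodule.Quotient.mk p), hψ _⟩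
      have h6 : (Submodule.Quotient.mk p : P ⧸ R)
          = R.mkQ (p - g (Submodule.Quotient.mk p)) := by
        rw [Submodule.mkQ_apply, Submodule.Quotient.mk_sub]
        rw [show (Submodule.Quotient.mk (g (Submodule.Quotient.mk p)) : P ⧸ R) = 0 from h5]
        abel
      rw [h6]
      exact kerSMul_map π R.mkQ ⟨_, hp, rfl⟩
    have := hNak (P ⧸ R) hfin htop
    have hRtop : R = ⊤ := Submodule.Quotient.subsingleton_iff.mp this
    exact LinearMap.range_eq_top.mp hRtop
  -- Splitting from projectivity
  obtain ⟨s, hs⟩ := Module.projective_lifting_property ψ LinearMap.id hsurj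
  have hsψ : ∀ p : P, ψ (s p) = p := fun p => congrArg (fun f => f p) hs
  set q : E →ₗ[A] E := LinearMap.id - s.comp ψ with hq
  have hqker : ∀ e : E, ψ (q e) = 0 := by
    intro e
    simp [hq, map_sub, hsψ]
  -- kernel of ψ equals range of q
  have hKrange : LinearMap.ker ψ = LinearMap.range q := by
    ext e
    constructor
    · intro he
      refine ⟨e, ?_⟩
      have : ψ e = 0 := he
      simp [hq, this]
    · rintro ⟨e', rfl⟩
      exact hqker e'
  -- E is finitely generated
  obtain ⟨S, hS⟩ := Module.Finite.fg_top (R := A) (M := P)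
  have hEfin : Module.Finite A E := by
    refine ⟨Submodule.fg_def.mpr ⟨(fun p => ι (Submodule.Quotient.mk p)) '' ↑S,
      S.finite_toSet.image _, ?_⟩⟩
    rw [eq_top_iff, ← Espan, Submodule.span_le]
    rintro _ ⟨t, rfl⟩
    -- t lies in the A₀-span of the images of S
    have ht : t ∈ Submodule.span A₀ ((fun p => (Submodule.Quotient.mk p : T)) '' ↑S) := by
      have htA : t ∈ Submodule.span A ((fun p => (Submodule.Quotient.mk p : T)) '' ↑S) := by
        have : Submodule.span A ((fun p => (Submodule.Quotient.mk p : T)) '' ↑S)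
            = Submodule.map (kerSMulSubmodule π P).mkQ (Submodule.span A ↑S) := by
          rw [Submodule.map_span]; rfl
        rw [this, hS, Submodule.map_top, Submodule.range_mkQ]
        exact Submodule.mem_top
      induction htA using Submodule.span_induction with
      | mem x hx => exact Submodule.subset_span hx
      | zero => exact Submodule.zero_mem _
      | add x y _ _ hx hy => exact Submodule.add_mem _ hx hy
      | smul a x _ hx =>
        rw [hTsmul a x]
        exact Submodule.smul_mem _ (π a) hx
    induction ht using Submodule.span_induction with
    | mem x hx =>
      obtain ⟨p, hp, rfl⟩ := hx
      exact Submodule.subset_span ⟨p, hp, rfl⟩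
    | zero => simp
    | add x y _ _ hx hy => rw [map_add]; exact Submodule.add_mem _ hx hy
    | smul c x _ hx =>
      rw [map_smul]
      exact Submodule.smul_mem _ (c : A) hx
  -- kernel of ψ is finitely generated
  have hKfin : Module.Finite A (LinearMap.ker ψ) := by
    have : Module.Finite A (LinearMap.range q) := inferInstance
    rw [hKrange]
    exact this
  -- the kernel satisfies K = A₊·K
  have hKtop : kerSMulSubmodule π (LinearMap.ker ψ) = ⊤ := by
    rw [Submodule.eq_top_iff']
    rintro ⟨k, hk⟩
    -- k lies in A₊·E
    have hkE : k ∈ kerSMulSubmodule π E := by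
      obtain ⟨t, ht⟩ := decomp k
      have hψkt : ψ (k - ι t) = -(g t) := by
        rw [map_sub, LinearMap.mem_ker.mp hk, hψ, zero_sub]
      have hgt : g t ∈ kerSMulSubmodule π P := by
        have : -(g t) ∈ kerSMulSubmodule π P := hψkt ▸ kerSMul_map π ψ ⟨_, ht, rfl⟩
        simpa using Submodule.neg_mem _ this
      have ht0 : t = 0 := by
        rw [← hg t, Submodule.Quotient.mk_eq_zero]
        exact hgt
      rw [ht0, map_zero, sub_zero] at ht
      exact ht
    -- map it into the kernel via the projector q
    set qK : E →ₗ[A] LinearMap.ker ψ := q.codRestrict (LinearMap.ker ψ) hqker with hqK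
    have hfix : qK k = ⟨k, hk⟩ := by
      apply Subtype.ext
      show q k = k
      simp [hq, LinearMap.mem_ker.mp hk]
    rw [← hfix]
    exact kerSMul_map π qK ⟨k, hkE, rfl⟩
  have hKsub := hNak (LinearMap.ker ψ) hKfin hKtop
  have hker0 : LinearMap.ker ψ = ⊥ := by
    rw [Submodule.eq_bot_iff]
    intro x hx
    have := hKsub.elim ⟨x, hx⟩ ⟨0, Submodule.zero_mem _⟩
    exact congrArg Subtype.val this
  exact ⟨LinearMap.ker_eq_bot.mp hker0, hsurj⟩
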